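/- Let A be a primitive axial algebra of Jordan type η over a field F with char F ≠ 2, generated by a set 𝒜 of η-axes such that the graph Δ_𝒜 is connected. Let a, b be distinct η-axes in A with τ_a = τ_b. If d is any η-axis in A with τ_d = τ_a, then d ∈ {a, b}. -/

import Mathlib

universe u v

section Prelim

variable (F : Type u) {A : Type v} [Field F] [NonUnitalNonAssocCommRing A]
  [Module F A] [SMulCommClass F A A] [IsScalarTower F A A]

/-- The λ-eigenspace of the adjoint map `ad_a : x ↦ a * x`. -/
def eigSp (a : A) (l : F) : Submodule F A where
  carrier := {x | a * x = l • x}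
  add_mem' := by
    intro x y hx hy
    simp only [Set.mem_setOf_eq] at *
    rw [mul_add, hx, hy, smul_add]
  zero_mem' := by simp
  smul_mem' := by
    intro c x hx
    simp only [Set.mem_setOf_eq] at *
    rw [mul_smul_comm, hx, smul_smul, smul_smul, mul_comm]

/-- `a` is a (primitive) `η`-axis. -/
structure IsAxis (η : F) (a : A) : Prop where
  ne_zero : a ≠ 0
  idem : a * a = a
  decomp : eigSp F a 1 ⊔ eigSp F a 0 ⊔ eigSp F a η = ⊤
  prim : eigSp F a 1 = Submodule.span F {a}
  f11 : ∀ x ∈ eigSp F a 1, ∀ y ∈ eigSp F a 1, x * y ∈ eigSp F a 1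
  f00 : ∀ x ∈ eigSp F a 0, ∀ y ∈ eigSp F a 0, x * y ∈ eigSp F a 0
  f10 : ∀ x ∈ eigSp F a 1, ∀ y ∈ eigSp F a 0, x * y = 0
  fpe : ∀ x ∈ eigSp F a 1 ⊔ eigSp F a 0, ∀ y ∈ eigSp F a η, x * y ∈ eigSp F a η
  fee : ∀ x ∈ eigSp F a η, ∀ y ∈ eigSp F a η, x * y ∈ eigSp F a 1 ⊔ eigSp F a 0

/-- `τ` is the Miyamoto involution of the `η`-axis `a`. -/
structure IsMiyamoto (η : F) (a : A) (τ : A → A) : Prop where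
  fixes : ∀ x ∈ eigSp F a 1 ⊔ eigSp F a 0, τ x = x
  negates : ∀ x ∈ eigSp F a η, τ x = -x
  map_add : ∀ x y : A, τ (x + y) = τ x + τ y
  map_smul : ∀ (c : F) (x : A), τ (c • x) = c • τ x
  map_mul : ∀ x y : A, τ (x * y) = τ x * τ y
  bijective : Function.Bijective τ

/-- `c = φ_a(u)`, the projection of `u` to `F·a` w.r.t. the axis `a`. -/
def IsProjCoeff (η : F) (a u : A) (c : F) : Prop :=
  ∃ u0 ∈ eigSp F a 0, ∃ ue ∈ eigSp F a η, u = c • a + u0 + ue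

/-- `e` is an identity element of the subalgebra `N`. -/
def IsIdentOf (N : NonUnitalSubalgebra F A) (e : A) : Prop :=
  e ∈ N ∧ ∀ z ∈ N, e * z = z

/-- `ψ` is an `F`-algebra automorphism of `A`. -/
structure IsAlgAut (ψ : A → A) : Prop where
  map_add : ∀ x y : A, ψ (x + y) = ψ x + ψ y
  map_smul : ∀ (c : F) (x : A), ψ (c • x) = c • ψ x
  map_mul : ∀ x y : A, ψ (x * y) = ψ x * ψ y
  bijective : Function.Bijective ψ

/-- The graph `Δ_𝒜`: distinct axes are adjacent iff their product is nonzero. -/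
def axesGraph (𝒜 : Set A) : SimpleGraph 𝒜 where
  Adj x y := x ≠ y ∧ (x : A) * (y : A) ≠ 0
  symm := by
    constructor
    rintro x y ⟨hxy, hm⟩
    exact ⟨hxy.symm, by rwa [mul_comm]⟩
  loopless := by constructor; rintro x ⟨h, -⟩; exact h rfl

/-- Multiplication of the Jordan algebra of Clifford type `J(V,B) = F·e ⊕ V`. -/
def cliffMul {V : Type*} [AddCommGroup V] [Module F V]
    (B : V →ₗ[F] V →ₗ[F] F) (x y : F × V) : F × V :=
  (x.1 * y.1 + B x.2 y.2, x.1 • y.2 + y.1 • x.2)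

end Prelim

/-- An isomorphism of `A` with a Jordan algebra of Clifford type `J(V,B)`. -/
structure CliffordTypeIso (F : Type u) (A : Type v) [Field F]
    [NonUnitalNonAssocCommRing A] [Module F A] [SMulCommClass F A A]
    [IsScalarTower F A A] where
  V : Type v
  [instAdd : AddCommGroup V]
  [instMod : Module F V]
  B : V →ₗ[F] V →ₗ[F] F
  symm : ∀ v w : V, B v w = B w v
  iso : A ≃ₗ[F] F × V
  mul_compat : ∀ x y : A, iso (x * y) = cliffMul F B (iso x) (iso y)
set_option linter.unusedSectionVars false

section Aux

variable {F : Type u} {A : Type v} [Field F] [NonUnitalNonAssocCommRing A]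
  [Module F A] [SMulCommClass F A A] [IsScalarTower F A A]
variable {η : F} {τ : A → A}

lemma mem_eigSp {a x : A} {l : F} : x ∈ eigSp F a l ↔ a * x = l • x := Iff.rfl

lemma smul_cancel {a : A} (ha : a ≠ 0) {κ κ' : F} (h : κ • a = κ' • a) : κ = κ' := by
  have h2 : (κ - κ') • a = 0 := by rw [sub_smul, h, sub_self]
  rcases smul_eq_zero.mp h2 with h3 | h3
  · exact sub_eq_zero.mp h3
  · exact absurd h3 ha

lemma tau_zero (hτ : IsMiyamoto F η a τ) : τ 0 = 0 := by
  have := hτ.map_smul 0 0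
  simpa using this

lemma tau_sub {a : A} (hτ : IsMiyamoto F η a τ) (u v : A) : τ (u - v) = τ u - τ v := by
  have h1 : u - v = u + (-1 : F) • v := by
    rw [neg_one_smul]; abel
  rw [h1, hτ.map_add, hτ.map_smul, neg_one_smul]; abel

lemma axis_mem_one {a : A} (ha : IsAxis F η a) : a ∈ eigSp F a 1 := by
  rw [mem_eigSp, ha.idem, one_smul]

lemma tau_fix_axis {a : A} (ha : IsAxis F η a) (hτ : IsMiyamoto F η a τ) : τ a = a :=
  hτ.fixes a (Submodule.mem_sup_left (axis_mem_one ha))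

lemma axis_decompose {a : A} (ha : IsAxis F η a) (u : A) :
    ∃ κ : F, ∃ u0 ∈ eigSp F a 0, ∃ uh ∈ eigSp F a η, u = κ • a + u0 + uh := by
  have hu : u ∈ eigSp F a 1 ⊔ eigSp F a 0 ⊔ eigSp F a η := by
    rw [ha.decomp]; trivial
  rcases Submodule.mem_sup.mp hu with ⟨v, hv, w, hw, huvw⟩
  rcases Submodule.mem_sup.mp hv with ⟨v1, hv1, v0, hv0, hv10⟩
  rw [ha.prim] at hv1
  rcases Submodule.mem_span_singleton.mp hv1 with ⟨κ, hκ⟩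
  exact ⟨κ, v0, hv0, w, hw, by rw [← huvw, ← hv10, ← hκ]⟩

lemma half_ne_zero (hchar : (2:F) ≠ 0) : (2:F)⁻¹ ≠ 0 := inv_ne_zero hchar

lemma two_smul_eq_zero {u : A} (hchar : (2:F) ≠ 0) (h : u + u = 0) : u = 0 := by
  have h2 : (2:F) • u = 0 := by rw [two_smul]; exact h
  rcases smul_eq_zero.mp h2 with h3 | h3
  · exact absurd h3 hchar
  · exact h3

lemma fix_iff {a : A} (hchar : (2:F) ≠ 0) (ha : IsAxis F η a) (hτ : IsMiyamoto F η a τ)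
    {u : A} : τ u = u ↔ u ∈ eigSp F a 1 ⊔ eigSp F a 0 := by
  constructor
  · intro h
    rcases axis_decompose ha u with ⟨κ, u0, hu0, uh, huh, hu⟩
    have hfix : τ (κ • a + u0) = κ • a + u0 :=
      hτ.fixes _ (Submodule.add_mem _ (Submodule.smul_mem _ _
        (Submodule.mem_sup_left (axis_mem_one ha))) (Submodule.mem_sup_right hu0))
    have hτu : τ u = (κ • a + u0) - uh := by
      rw [hu, hτ.map_add, hfix, hτ.negates uh huh]; abel
    have hzero : uh + uh = 0 := by
      have heq : (κ • a + u0) - uh = (κ • a + u0) + uh := by rw [← hu, ← h, hτu]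
      have h2 : uh + uh = (κ • a + u0 + uh) - (κ • a + u0 - uh) := by abel
      rw [← heq, sub_self] at h2
      exact h2
    have huh0 : uh = 0 := two_smul_eq_zero hchar hzero
    rw [hu, huh0, add_zero]
    exact Submodule.add_mem _ (Submodule.smul_mem _ _
      (Submodule.mem_sup_left (axis_mem_one ha))) (Submodule.mem_sup_right hu0)
  · exact hτ.fixes u

lemma neg_iff {a : A} (hchar : (2:F) ≠ 0) (ha : IsAxis F η a) (hτ : IsMiyamoto F η a τ)
    {u : A} : τ u = -u ↔ u ∈ eigSp F a η := by
  constructor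
  · intro h
    rcases axis_decompose ha u with ⟨κ, u0, hu0, uh, huh, hu⟩
    have hfix : τ (κ • a + u0) = κ • a + u0 :=
      hτ.fixes _ (Submodule.add_mem _ (Submodule.smul_mem _ _
        (Submodule.mem_sup_left (axis_mem_one ha))) (Submodule.mem_sup_right hu0))
    have hτu : τ u = (κ • a + u0) - uh := by
      rw [hu, hτ.map_add, hfix, hτ.negates uh huh]; abel
    have hzero : (κ • a + u0) + (κ • a + u0) = 0 := by
      have h1 : (κ • a + u0) - uh = -((κ • a + u0) + uh) := by
        rw [← hu, ← h, hτu]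
      have h2 : (κ • a + u0) + (κ • a + u0) = ((κ • a + u0) - uh) + ((κ • a + u0) + uh) := by abel
      rw [h1, neg_add_cancel] at h2
      exact h2
    have hP0 : κ • a + u0 = 0 := two_smul_eq_zero hchar hzero
    have : u = uh := by rw [hu, hP0, zero_add]
    rw [this]; exact huh
  · exact hτ.negates u

lemma split0 {a : A} (hchar : (2:F) ≠ 0) (hτ : IsMiyamoto F η a τ) {w m : A}
    (hw : τ w = w) (hm : τ m = -m) (h : w + m = 0) : w = 0 ∧ m = 0 := by
  have h1 : τ (w + m) = w - m := by rw [hτ.map_add, hw, hm]; abel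
  have h2 : w - m = 0 := by rw [← h1, h, tau_zero hτ]
  have hw0 : w + w = 0 := by
    have h3 : (w + m) + (w - m) = w + w := by abel
    rw [h, h2, add_zero] at h3; exact h3.symm
  have hww : w = 0 := two_smul_eq_zero hchar hw0
  refine ⟨hww, ?_⟩
  rw [hww, zero_add] at h; exact h

lemma proj {a : A} (hchar : (2:F) ≠ 0) (ha : IsAxis F η a) (hτ : IsMiyamoto F η a τ)
    {u : A} (hu : τ u = u) : ∃ κ : F, ∃ u0 ∈ eigSp F a 0, u = κ • a + u0 ∧ a * u = κ • a := by
  have hmem := (fix_iff hchar ha hτ).mp hu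
  rcases Submodule.mem_sup.mp hmem with ⟨v1, hv1, v0, hv0, hvu⟩
  rw [ha.prim] at hv1
  rcases Submodule.mem_span_singleton.mp hv1 with ⟨κ, hκ⟩
  refine ⟨κ, v0, hv0, by rw [← hvu, ← hκ], ?_⟩
  rw [← hvu, ← hκ, mul_add, mul_smul_comm, ha.idem, mem_eigSp.mp hv0, zero_smul, add_zero]

lemma projMul {a : A} (hchar : (2:F) ≠ 0) (ha : IsAxis F η a) (hτ : IsMiyamoto F η a τ)
    {u v : A} (hu : τ u = u) (hv : τ v = v) {κ κ' : F}
    (h1 : a * u = κ • a) (h2 : a * v = κ' • a) : a * (u * v) = (κ * κ') • a := by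
  rcases proj hchar ha hτ hu with ⟨l1, u0, hu0, hueq, hau⟩
  rcases proj hchar ha hτ hv with ⟨l2, v0, hv0, hveq, hav⟩
  have hl1 : l1 = κ := smul_cancel ha.ne_zero (by rw [← hau, h1])
  have hl2 : l2 = κ' := smul_cancel ha.ne_zero (by rw [← hav, h2])
  have hv00 : a * v0 = 0 := by rw [mem_eigSp.mp hv0, zero_smul]
  have hu00 : a * u0 = 0 := by rw [mem_eigSp.mp hu0, zero_smul]
  have hu00' : u0 * a = 0 := by rw [mul_comm]; exact hu00
  have huv : u * v = (l1 * l2) • a + u0 * v0 := by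
    rw [hueq, hveq]
    simp only [add_mul, mul_add, smul_mul_assoc, mul_smul_comm, smul_smul, ha.idem, hv00,
      hu00', smul_zero, add_zero, zero_add, mul_comm l2 l1]
  have hfin : a * (u * v) = (l1 * l2) • a := by
    rw [huv, mul_add, mul_smul_comm, ha.idem,
      mem_eigSp.mp (ha.f00 u0 hu0 v0 hv0), zero_smul, add_zero]
  rw [hfin, hl1, hl2]

lemma same_tau_orth (hchar : (2:F) ≠ 0) {e f : A}
    (he : IsAxis F η e) (hf : IsAxis F η f)
    (hτe : IsMiyamoto F η e τ) (hτf : IsMiyamoto F η f τ) :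
    e = f ∨ e * f = 0 := by
  have hff : τ f = f := tau_fix_axis hf hτf
  have hee : τ e = e := tau_fix_axis he hτe
  rcases proj hchar he hτe hff with ⟨κ, f0, hf0, hfeq, hef⟩
  have hsq : e * (f * f) = (κ * κ) • e := projMul hchar he hτe hff hff hef hef
  rw [hf.idem, hef] at hsq
  have hκ : κ * κ = κ := smul_cancel he.ne_zero hsq.symm
  by_cases hκ0 : κ = 0
  · right; rw [hef, hκ0, zero_smul]
  · have hκ1 : κ = 1 := mul_left_cancel₀ hκ0 (by rw [hκ, mul_one])
    have hefe : e * f = e := by rw [hef, hκ1, one_smul]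
    rcases proj hchar hf hτf hee with ⟨lam, e0, he0, heeq, hfe⟩
    have h1 : e = lam • f := by rw [← hefe, mul_comm, hfe]
    have h2 : (lam * lam) • f = lam • f := by
      have h3 : (lam • f) * (lam • f) = (lam * lam) • f := by
        rw [smul_mul_assoc, mul_smul_comm, smul_smul, hf.idem]
      rw [← h3, ← h1, he.idem, h1]
    have hl : lam * lam = lam := smul_cancel hf.ne_zero h2
    have hlam0 : lam ≠ 0 := by
      rintro rfl; rw [zero_smul] at h1; exact he.ne_zero h1
    have hlam1 : lam = 1 := mul_left_cancel₀ hlam0 (by rw [hl, mul_one])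
    left; rw [h1, hlam1, one_smul]

lemma Ieq (hchar : (2:F) ≠ 0) {c p x u : A} {κ : F}
    (hc : IsAxis F η c) (hτu : IsMiyamoto F η u τ)
    (hcpx : c = p + x)
    (hp : τ p = p) (hx : τ x = -x) (hx0 : x ≠ 0)
    (hpx : p * x = (2:F)⁻¹ • x)
    (hup : u * p = κ • u) (hux : u * x = η • x)
    (hu_fix : τ u = u) :
    η • (x * x) = (η * κ - κ * κ) • u + (κ * η + η * (2:F)⁻¹ - η * η) • p := by
  rcases axis_decompose hc u with ⟨γ, u0, hu0, uw, huw, hudec⟩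
  have hcu0 : c * u0 = 0 := by rw [mem_eigSp.mp hu0, zero_smul]
  have hcuw : c * uw = η • uw := mem_eigSp.mp huw
  have h1 : c * u = γ • c + (η • uw) := by
    rw [hudec, mul_add, mul_add, mul_smul_comm, hc.idem, hcu0, add_zero, hcuw]
  have h2 : c * (c * u) = γ • c + (η * η) • uw := by
    rw [h1, mul_add, mul_smul_comm, hc.idem, mul_smul_comm, hcuw, smul_smul]
  have h3 : c * (c * u) - η • (c * u) = ((1 - η) * γ) • c := by
    rw [h2, h1]
    module
  have h4 : c * u = κ • u + η • x := by
    rw [hcpx, add_mul, mul_comm p u, hup, mul_comm x u, hux]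
  have hcx : c * x = (2:F)⁻¹ • x + x * x := by
    rw [hcpx, add_mul, hpx]
  have h5 : c * (c * u) = κ • (κ • u + η • x) + η • ((2:F)⁻¹ • x + x * x) := by
    rw [h4, mul_add, mul_smul_comm, mul_smul_comm, h4, hcx]
  have hE : κ • (κ • u + η • x) + η • ((2:F)⁻¹ • x + x * x) - η • (κ • u + η • x)
      = ((1 - η) * γ) • p + ((1 - η) * γ) • x := by
    rw [← h5, ← h4, h3, hcpx, smul_add]
  have hWM : ((κ * κ - η * κ) • u + η • (x * x) - ((1 - η) * γ) • p)
      + ((κ * η + η * (2:F)⁻¹ - η * η - (1 - η) * γ) • x) = 0 := by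
    linear_combination (norm := module) hE
  have hxxfix : τ (x * x) = x * x := by rw [hτu.map_mul, hx, neg_mul_neg]
  have hWfix : τ ((κ * κ - η * κ) • u + η • (x * x) - ((1 - η) * γ) • p)
      = (κ * κ - η * κ) • u + η • (x * x) - ((1 - η) * γ) • p := by
    rw [tau_sub hτu, hτu.map_add, hτu.map_smul, hτu.map_smul, hτu.map_smul,
      hu_fix, hxxfix, hp]
  have hMneg : τ ((κ * η + η * (2:F)⁻¹ - η * η - (1 - η) * γ) • x)
      = -((κ * η + η * (2:F)⁻¹ - η * η - (1 - η) * γ) • x) := by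
    rw [hτu.map_smul, hx, smul_neg]
  rcases split0 hchar hτu hWfix hMneg hWM with ⟨hW0, hM0⟩
  have hcoef : κ * η + η * (2:F)⁻¹ - η * η - (1 - η) * γ = 0 := by
    rcases smul_eq_zero.mp hM0 with h | h
    · exact h
    · exact absurd h hx0
  have hgam : (1 - η) * γ = κ * η + η * (2:F)⁻¹ - η * η := by linear_combination -hcoef
  have hfin : η • (x * x) = (η * κ - κ * κ) • u + ((1 - η) * γ) • p := by
    linear_combination (norm := module) hW0
  rw [hgam] at hfin
  exact hfin

lemma scalEq (hchar : (2:F) ≠ 0) {v p x u : A} {κv t c1 c2 : F}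
    (hv : IsAxis F η v) (hτv : IsMiyamoto F η v τ)
    (hp : τ p = p)
    (hsq : p * p + x * x = p)
    (hvp : v * p = κv • v) (hvu : v * u = t • v)
    (hIeq : η • (x * x) = c1 • u + c2 • p) :
    η * (κv - κv * κv) = c1 * t + c2 * κv := by
  have hvpp : v * (p * p) = (κv * κv) • v := projMul hchar hv hτv hp hp hvp hvp
  have hvxx : v * (x * x) = (κv - κv * κv) • v := by
    have hxx : x * x = p - p * p := by rw [eq_sub_iff_add_eq, add_comm]; exact hsq
    rw [hxx, mul_sub, hvp, hvpp, ← sub_smul]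
  have h1 : v * (η • (x * x)) = (η * (κv - κv * κv)) • v := by
    rw [mul_smul_comm, hvxx, smul_smul]
  have h2 : v * (c1 • u + c2 • p) = (c1 * t + c2 * κv) • v := by
    rw [mul_add, mul_smul_comm, mul_smul_comm, hvu, hvp, smul_smul, smul_smul, ← add_smul]
  rw [hIeq, h2] at h1
  exact (smul_cancel hv.ne_zero h1).symm

lemma KM (hchar : (2:F) ≠ 0) (hη0 : η ≠ 0) {c p x u v : A}
    (hc : IsAxis F η c) (hcpx : c = p + x)
    (huv : u * v = 0) (hu2 : u * u = u) (hv2 : v * v = v)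
    (hup : u * p = 0) (hvp : v * p = 0)
    (hux : u * x = η • x) (hvx : v * x = η • x) : x = 0 := by
  have h1 : c * (u - v) = 0 := by
    rw [hcpx, mul_sub, add_mul, add_mul, mul_comm p u, hup, mul_comm x u, hux,
      mul_comm p v, hvp, mul_comm x v, hvx, zero_add, sub_self]
  have hmem : u - v ∈ eigSp F c 0 := by rw [mem_eigSp, h1, zero_smul]
  have hmem2 := hc.f00 _ hmem _ hmem
  have hprod : (u - v) * (u - v) = u + v := by
    rw [sub_mul, mul_sub, mul_sub, hu2, hv2, huv, mul_comm v u, huv]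
    abel
  rw [hprod] at hmem2
  have h2 : c * (u + v) = 0 := by rw [mem_eigSp.mp hmem2, zero_smul]
  have h3 : c * (u + v) = η • x + η • x := by
    rw [hcpx, add_mul, mul_add, mul_add, mul_comm p u, hup, mul_comm x u, hux,
      mul_comm p v, hvp, mul_comm x v, hvx, zero_add, zero_add]
  have h4 : η • x + η • x = 0 := by rw [← h3, h2]
  have h5 : η • x = 0 := two_smul_eq_zero hchar h4
  rcases smul_eq_zero.mp h5 with h | h
  · exact absurd h hη0
  · exact h

lemma KH (hchar : (2:F) ≠ 0) (hη0 : η ≠ 0) {c p x a b d : A}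
    (hc : IsAxis F η c) (hτa : IsMiyamoto F η a τ)
    (hcpx : c = p + x)
    (hp : τ p = p) (hx : τ x = -x) (ha_fix : τ a = a)
    (hη2 : η + η = 1)
    (ha2 : a * a = a) (hane : a ≠ 0)
    (hab : a * b = 0) (had : a * d = 0) (hbd : b * d = 0)
    (hap : a * p = η • a) (hbp : b * p = η • b) (hdp : d * p = η • d)
    (hax : a * x = η • x) (hbx : b * x = η • x) (hdx : d * x = η • x)
    (hpx : p * x = η • x) (hxx : x * x = η • p) : False := by
  have hmab : c * (a - b) = η • (a - b) := by
    rw [hcpx, mul_sub, add_mul, add_mul, mul_comm p a, hap, mul_comm x a, hax,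
      mul_comm p b, hbp, mul_comm x b, hbx, smul_sub]
    abel
  have hmad : c * (a - d) = η • (a - d) := by
    rw [hcpx, mul_sub, add_mul, add_mul, mul_comm p a, hap, mul_comm x a, hax,
      mul_comm p d, hdp, mul_comm x d, hdx, smul_sub]
    abel
  have hsup := hc.fee _ (mem_eigSp.mpr hmab) _ (mem_eigSp.mpr hmad)
  have hprod : (a - b) * (a - d) = a := by
    rw [sub_mul, mul_sub, mul_sub, ha2, had, mul_comm b a, hab, hbd]
    abel
  rw [hprod] at hsup
  rcases Submodule.mem_sup.mp hsup with ⟨w1, hw1, w0, hw0, hws⟩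
  have hca : c * a = w1 := by
    rw [← hws, mul_add, mem_eigSp.mp hw1, one_smul, mem_eigSp.mp hw0, zero_smul, add_zero]
  have hcca : c * (c * a) = c * a := by
    rw [hca, mem_eigSp.mp hw1, one_smul]
  have hca2 : c * a = η • a + η • x := by
    rw [hcpx, add_mul, mul_comm p a, hap, mul_comm x a, hax]
  have hcx : c * x = η • x + η • p := by
    rw [hcpx, add_mul, hpx, hxx]
  have hcca2 : c * (c * a) = η • (η • a + η • x) + η • (η • x + η • p) := by
    rw [hca2, mul_add, mul_smul_comm, mul_smul_comm, hca2, hcx]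
  rw [hcca2, hca2] at hcca
  -- split into tau-parts
  have hWM : (((η * η) • a + (η * η) • p - η • a))
      + ((η * η + η * η - η) • x) = 0 := by
    linear_combination (norm := module) hcca
  have hWfix : τ ((η * η) • a + (η * η) • p - η • a)
      = (η * η) • a + (η * η) • p - η • a := by
    rw [tau_sub hτa, hτa.map_add, hτa.map_smul, hτa.map_smul, hτa.map_smul, ha_fix, hp]
  have hMneg : τ ((η * η + η * η - η) • x) = -((η * η + η * η - η) • x) := by
    rw [hτa.map_smul, hx, smul_neg]
  rcases split0 hchar hτa hWfix hMneg hWM with ⟨hW0, -⟩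
  -- (η*η)•p = (η − η*η)•a
  have hpa : (η * η) • p = (η - η * η) • a := by
    linear_combination (norm := module) hW0
  have h6 : a * ((η * η) • p) = (η * η * η) • a := by
    rw [mul_smul_comm, hap, smul_smul]
  have h7 : a * ((η - η * η) • a) = (η - η * η) • a := by
    rw [mul_smul_comm, ha2]
  have h8 : (η * η * η) • a = (η - η * η) • a := by rw [← h6, ← h7, hpa]
  have h9 : η * η * η = η - η * η := smul_cancel hane h8
  have : (1 : F) = 0 := by linear_combination (-8)*h9 + (4*η^2 + 6*η - 1)*hη2
  exact one_ne_zero this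

end Aux

section Scalar

variable {F : Type u} [Field F]

/-- Pure field computation: from the nine scalar equations, either two of the three
projection values vanish, or `η = 1/2` and all three values equal `η`. -/
lemma scalarCase (hchar : (2:F) ≠ 0) {η κa κb κd : F} (hη0 : η ≠ 0)
    (Saa : η * (κa - κa * κa) = (η * κa - κa * κa) * 1 + (κa * η + η * (2:F)⁻¹ - η * η) * κa)
    (Sbb : η * (κb - κb * κb) = (η * κb - κb * κb) * 1 + (κb * η + η * (2:F)⁻¹ - η * η) * κb)
    (Sdd : η * (κd - κd * κd) = (η * κd - κd * κd) * 1 + (κd * η + η * (2:F)⁻¹ - η * η) * κd)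
    (Eab : η * (κb - κb * κb) = (η * κa - κa * κa) * 0 + (κa * η + η * (2:F)⁻¹ - η * η) * κb)
    (Ead : η * (κd - κd * κd) = (η * κa - κa * κa) * 0 + (κa * η + η * (2:F)⁻¹ - η * η) * κd)
    (Eba : η * (κa - κa * κa) = (η * κb - κb * κb) * 0 + (κb * η + η * (2:F)⁻¹ - η * η) * κa)
    (Ebd : η * (κd - κd * κd) = (η * κb - κb * κb) * 0 + (κb * η + η * (2:F)⁻¹ - η * η) * κd)
    (Eda : η * (κa - κa * κa) = (η * κd - κd * κd) * 0 + (κd * η + η * (2:F)⁻¹ - η * η) * κa)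
    (Edb : η * (κb - κb * κb) = (η * κd - κd * κd) * 0 + (κd * η + η * (2:F)⁻¹ - η * η) * κb) :
    (κa = 0 ∧ κb = 0) ∨ (κa = 0 ∧ κd = 0) ∨ (κb = 0 ∧ κd = 0) ∨
      (2 * η - 1 = 0 ∧ κa = η ∧ κb = η ∧ κd = η) := by
  have h2inv : (2:F) * (2:F)⁻¹ = 1 := mul_inv_cancel₀ hchar
  -- helper : sum of a nonzero pair
  have sum_nz : ∀ C κu κv : F,
      η * (κv - κv * κv) = C * 0 + (κu * η + η * (2:F)⁻¹ - η * η) * κv → κv ≠ 0 →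
      κu + κv = η + (2:F)⁻¹ := by
    intro C κu κv hE hv0
    have h2 : η * (κv * (κu + κv - η - (2:F)⁻¹)) = 0 := by
      linear_combination -hE + (-(η * κv)) * h2inv
    rcases mul_eq_zero.mp h2 with h | h
    · exact absurd h hη0
    rcases mul_eq_zero.mp h with h | h
    · exact absurd h hv0
    · linear_combination h
  -- helper : factored self equation
  have fact_self : ∀ κ : F,
      η * (κ - κ * κ) = (η * κ - κ * κ) * 1 + (κ * η + η * (2:F)⁻¹ - η * η) * κ →
      κ * ((2 * η - 1) * (2 * κ - η)) = 0 := by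
    intro κ hS
    linear_combination (-2) * hS + (-(η * κ)) * h2inv
  -- helper : if a nonzero pair exists then η = 1/2
  have half_of_pair : ∀ κu κv : F, κu ≠ 0 → κv ≠ 0 →
      κu * ((2 * η - 1) * (2 * κu - η)) = 0 →
      κv * ((2 * η - 1) * (2 * κv - η)) = 0 →
      κu + κv = η + (2:F)⁻¹ → 2 * η - 1 = 0 := by
    intro κu κv hu0 hv0 hFu hFv hsum
    by_contra hhalf
    have h1 : 2 * κu = η := by
      rcases mul_eq_zero.mp hFu with h | h
      · exact absurd h hu0
      rcases mul_eq_zero.mp h with h | h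
      · exact absurd h hhalf
      · linear_combination h
    have h2 : 2 * κv = η := by
      rcases mul_eq_zero.mp hFv with h | h
      · exact absurd h hv0
      rcases mul_eq_zero.mp h with h | h
      · exact absurd h hhalf
      · linear_combination h
    have : (1:F) = 0 := by
      linear_combination (-2) * hsum + h1 + h2 - h2inv
    exact one_ne_zero this
  -- helper : in the half case, a nonzero κu paired with a zero κw forces κu = 1
  have one_of_zero : ∀ κu κw C : F, κu ≠ 0 → κw = 0 → 2 * η - 1 = 0 →
      η * (κu - κu * κu) = C * 0 + (κw * η + η * (2:F)⁻¹ - η * η) * κu → κu = 1 := by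
    intro κu κw C hu0 hw0 hhalf hE
    subst hw0
    have h5 : (η * κu) * (1 - κu) = 0 := by
      linear_combination hE + (-(η * κu * (2:F)⁻¹)) * hhalf + (η * η * κu) * h2inv
    rcases mul_eq_zero.mp h5 with h | h
    · rcases mul_eq_zero.mp h with h | h
      · exact absurd h hη0
      · exact absurd h hu0
    · linear_combination -h
  have sum1 : ∀ κu κv : F, κu + κv = η + (2:F)⁻¹ → 2 * η - 1 = 0 → κu + κv = 1 := by
    intro κu κv h hh
    linear_combination h + (2:F)⁻¹ * hh + (1 - η) * h2inv
  have eq_eta : ∀ κ : F, κ + κ = 1 → 2 * η - 1 = 0 → κ = η := by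
    intro κ hk hh
    have h3 : (2:F) * (κ - η) = 0 := by linear_combination hk - hh
    rcases mul_eq_zero.mp h3 with h | h
    · exact absurd h hchar
    · linear_combination h
  by_cases hA : κa = 0
  · by_cases hB : κb = 0
    · exact Or.inl ⟨hA, hB⟩
    · by_cases hD : κd = 0
      · exact Or.inr (Or.inl ⟨hA, hD⟩)
      · -- κb, κd nonzero, κa = 0
        have hsum := sum_nz _ _ _ Ebd hD
        have hhalf := half_of_pair _ _ hB hD (fact_self _ Sbb) (fact_self _ Sdd) hsum
        have hb1 : κb = 1 := one_of_zero _ _ _ hB hA hhalf Eab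
        have hd0 : κd = 0 := by
          have h7 : κb + κd = 1 := sum1 _ _ hsum hhalf
          linear_combination h7 - hb1
        exact absurd hd0 hD
  · by_cases hB : κb = 0
    · by_cases hD : κd = 0
      · exact Or.inr (Or.inr (Or.inl ⟨hB, hD⟩))
      · -- κa, κd nonzero, κb = 0
        have hsum := sum_nz _ _ _ Ead hD
        have hhalf := half_of_pair _ _ hA hD (fact_self _ Saa) (fact_self _ Sdd) hsum
        have ha1 : κa = 1 := one_of_zero _ _ _ hA hB hhalf Eba
        have hd0 : κd = 0 := by
          have h7 : κa + κd = 1 := sum1 _ _ hsum hhalf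
          linear_combination h7 - ha1
        exact absurd hd0 hD
    · by_cases hD : κd = 0
      · -- κa, κb nonzero, κd = 0
        have hsum := sum_nz _ _ _ Eab hB
        have hhalf := half_of_pair _ _ hA hB (fact_self _ Saa) (fact_self _ Sbb) hsum
        have ha1 : κa = 1 := one_of_zero _ _ _ hA hD hhalf Eda
        have hb0 : κb = 0 := by
          have h7 : κa + κb = 1 := sum1 _ _ hsum hhalf
          linear_combination h7 - ha1
        exact absurd hb0 hB
      · -- all nonzero
        have hsumab := sum_nz _ _ _ Eab hB
        have hsumad := sum_nz _ _ _ Ead hD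
        have hsumbd := sum_nz _ _ _ Ebd hD
        have hhalf := half_of_pair _ _ hA hB (fact_self _ Saa) (fact_self _ Sbb) hsumab
        have s1 := sum1 _ _ hsumab hhalf
        have s2 := sum1 _ _ hsumad hhalf
        have s3 := sum1 _ _ hsumbd hhalf
        refine Or.inr (Or.inr (Or.inr ⟨hhalf, ?_, ?_, ?_⟩))
        · exact eq_eta _ (by linear_combination s1 + s2 - s3) hhalf
        · exact eq_eta _ (by linear_combination s1 + s3 - s2) hhalf
        · exact eq_eta _ (by linear_combination s2 + s3 - s1) hhalf

end Scalar

section Aux2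

variable {F : Type u} {A : Type v} [Field F] [NonUnitalNonAssocCommRing A]
  [Module F A] [SMulCommClass F A A] [IsScalarTower F A A]
variable {η : F} {τ : A → A}

lemma no_mixed (hchar : (2:F) ≠ 0) (hη0 : η ≠ 0) (hη1 : η ≠ 1)
    {a b d c p x : A}
    (ha : IsAxis F η a) (hb : IsAxis F η b) (hd : IsAxis F η d)
    (hτa : IsMiyamoto F η a τ) (hτb : IsMiyamoto F η b τ) (hτd : IsMiyamoto F η d τ)
    (hab : a * b = 0) (had : a * d = 0) (hbd : b * d = 0)
    (hc : IsAxis F η c)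
    (hp : τ p = p) (hx : τ x = -x) (hcpx : c = p + x) :
    x = 0 := by
  by_contra hx0
  have hax : a * x = η • x := mem_eigSp.mp ((neg_iff hchar ha hτa).mp hx)
  have hbx : b * x = η • x := mem_eigSp.mp ((neg_iff hchar hb hτb).mp hx)
  have hdx : d * x = η • x := mem_eigSp.mp ((neg_iff hchar hd hτd).mp hx)
  rcases proj hchar ha hτa hp with ⟨κa, p0a, hp0a, hpeqa, hap⟩
  rcases proj hchar hb hτb hp with ⟨κb, p0b, hp0b, hpeqb, hbp⟩
  rcases proj hchar hd hτd hp with ⟨κd, p0d, hp0d, hpeqd, hdp⟩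
  have hcc : p * p + p * x + (x * p + x * x) = p + x := by
    have h := hc.idem
    rw [hcpx, add_mul, mul_add, mul_add] at h
    exact h
  have hWM1 : ((p * p + x * x) - p) + ((p * x + x * p) - x) = 0 := by
    linear_combination (norm := module) hcc
  have hWfix1 : τ ((p * p + x * x) - p) = (p * p + x * x) - p := by
    rw [tau_sub hτa, hτa.map_add, hτa.map_mul, hτa.map_mul, hp, hx, neg_mul_neg]
  have hMneg1 : τ ((p * x + x * p) - x) = -((p * x + x * p) - x) := by
    rw [tau_sub hτa, hτa.map_add, hτa.map_mul, hτa.map_mul, hp, hx, mul_neg, neg_mul]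
    abel
  rcases split0 hchar hτa hWfix1 hMneg1 hWM1 with ⟨hW1, hM1⟩
  have hsq : p * p + x * x = p := by rwa [sub_eq_zero] at hW1
  have hpx : p * x = (2:F)⁻¹ • x := by
    have h1 : p * x + p * x = x := by
      rw [mul_comm x p, sub_eq_zero] at hM1
      exact hM1
    have h2 : (2:F) • (p * x) = x := by rw [two_smul]; exact h1
    calc p * x = ((2:F)⁻¹ * 2) • (p * x) := by rw [inv_mul_cancel₀ hchar, one_smul]
      _ = (2:F)⁻¹ • ((2:F) • (p * x)) := by rw [smul_smul]
      _ = (2:F)⁻¹ • x := by rw [h2]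
  have Ia := Ieq hchar hc hτa hcpx hp hx hx0 hpx hap hax (tau_fix_axis ha hτa)
  have Ib := Ieq hchar hc hτb hcpx hp hx hx0 hpx hbp hbx (tau_fix_axis hb hτb)
  have Id := Ieq hchar hc hτd hcpx hp hx hx0 hpx hdp hdx (tau_fix_axis hd hτd)
  have haa : a * a = (1:F) • a := by rw [ha.idem, one_smul]
  have hbb : b * b = (1:F) • b := by rw [hb.idem, one_smul]
  have hdd : d * d = (1:F) • d := by rw [hd.idem, one_smul]
  have hba : b * a = (0:F) • b := by rw [mul_comm, hab, zero_smul]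
  have hda : d * a = (0:F) • d := by rw [mul_comm, had, zero_smul]
  have hab' : a * b = (0:F) • a := by rw [hab, zero_smul]
  have hdb : d * b = (0:F) • d := by rw [mul_comm, hbd, zero_smul]
  have had' : a * d = (0:F) • a := by rw [had, zero_smul]
  have hbd' : b * d = (0:F) • b := by rw [hbd, zero_smul]
  have Saa := scalEq hchar ha hτa hp hsq hap haa Ia
  have Sbb := scalEq hchar hb hτb hp hsq hbp hbb Ib
  have Sdd := scalEq hchar hd hτd hp hsq hdp hdd Id
  have Eab := scalEq hchar hb hτb hp hsq hbp hba Ia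
  have Ead := scalEq hchar hd hτd hp hsq hdp hda Ia
  have Eba := scalEq hchar ha hτa hp hsq hap hab' Ib
  have Ebd := scalEq hchar hd hτd hp hsq hdp hdb Ib
  have Eda := scalEq hchar ha hτa hp hsq hap had' Id
  have Edb := scalEq hchar hb hτb hp hsq hbp hbd' Id
  rcases scalarCase hchar hη0 Saa Sbb Sdd Eab Ead Eba Ebd Eda Edb with
    ⟨hA, hB⟩ | ⟨hA, hD⟩ | ⟨hB, hD⟩ | ⟨hhalf, hka, hkb, hkd⟩
  · have hap0 : a * p = 0 := by rw [hap, hA, zero_smul]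
    have hbp0 : b * p = 0 := by rw [hbp, hB, zero_smul]
    exact hx0 (KM hchar hη0 hc hcpx hab ha.idem hb.idem hap0 hbp0 hax hbx)
  · have hap0 : a * p = 0 := by rw [hap, hA, zero_smul]
    have hdp0 : d * p = 0 := by rw [hdp, hD, zero_smul]
    exact hx0 (KM hchar hη0 hc hcpx had ha.idem hd.idem hap0 hdp0 hax hdx)
  · have hbp0 : b * p = 0 := by rw [hbp, hB, zero_smul]
    have hdp0 : d * p = 0 := by rw [hdp, hD, zero_smul]
    exact hx0 (KM hchar hη0 hc hcpx hbd hb.idem hd.idem hbp0 hdp0 hbx hdx)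
  · have hη2 : η + η = 1 := by linear_combination hhalf
    have h2inv : (2:F)⁻¹ = η := by
      have h3 : (2:F) * ((2:F)⁻¹ - η) = 0 := by
        rw [mul_sub, mul_inv_cancel₀ hchar]
        linear_combination -hhalf
      rcases mul_eq_zero.mp h3 with h | h
      · exact absurd h hchar
      · linear_combination h
    have hap' : a * p = η • a := by rw [hap, hka]
    have hbp' : b * p = η • b := by rw [hbp, hkb]
    have hdp' : d * p = η • d := by rw [hdp, hkd]
    have hpx' : p * x = η • x := by rw [hpx, h2inv]
    rw [hka, h2inv] at Ia
    have hxx : x * x = η • p := by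
      have h6 : η • (x * x) = η • (η • p) := by rw [Ia]; module
      exact smul_right_injective A hη0 h6
    exact KH hchar hη0 hc hτa hcpx hp hx (tau_fix_axis ha hτa) hη2 ha.idem ha.ne_zero
      hab had hbd hap' hbp' hdp' hax hbx hdx hpx' hxx

end Aux2



/-- With `Δ_𝒜` connected and distinct `η`-axes `a, b` satisfying
`τ_a = τ_b`, any `η`-axis `d` with `τ_d = τ_a` satisfies `d ∈ {a, b}`. -/
theorem at_most_two_axes_with_same_miyamoto
    {F : Type u} {A : Type v} [Field F] [NonUnitalNonAssocCommRing A]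
    [Module F A] [SMulCommClass F A A] [IsScalarTower F A A]
    (hchar : (2 : F) ≠ 0) (η : F) (hη0 : η ≠ 0) (hη1 : η ≠ 1)
    (𝒜 : Set A) (h𝒜 : ∀ a ∈ 𝒜, IsAxis F η a)
    (hgen : NonUnitalAlgebra.adjoin F 𝒜 = ⊤)
    (hconn : (axesGraph 𝒜).Connected)
    (a b : A) (ha : IsAxis F η a) (hb : IsAxis F η b) (hab : a ≠ b)
    (τa τb : A → A) (hτa : IsMiyamoto F η a τa) (hτb : IsMiyamoto F η b τb)
    (hττ : τa = τb)
    (d : A) (hd : IsAxis F η d) (τd : A → A) (hτd : IsMiyamoto F η d τd)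
    (hτda : τd = τa) :
    d = a ∨ d = b := by
  rw [← hττ] at hτb
  rw [hτda] at hτd
  rcases same_tau_orth hchar hd ha hτd hτa with hda | hda
  · exact Or.inl hda
  rcases same_tau_orth hchar hd hb hτd hτb with hdb | hdb
  · exact Or.inr hdb
  rcases same_tau_orth hchar ha hb hτa hτb with hab2 | hab2
  · exact absurd hab2 hab
  exfalso
  have had2 : a * d = 0 := by rw [mul_comm]; exact hda
  have hbd2 : b * d = 0 := by rw [mul_comm]; exact hdb
  -- every generator is fixed by τa
  have hfix𝒜 : ∀ c ∈ 𝒜, τa c = c := by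
    intro c hc𝒜
    have hcax := h𝒜 c hc𝒜
    rcases axis_decompose ha c with ⟨κ, c0, hc0, ch, hch, hceq⟩
    have hpfix : τa (κ • a + c0) = κ • a + c0 :=
      hτa.fixes _ (Submodule.add_mem _ (Submodule.smul_mem _ _
        (Submodule.mem_sup_left (axis_mem_one ha))) (Submodule.mem_sup_right hc0))
    have hneg : τa ch = -ch := hτa.negates ch hch
    have hch0 : ch = 0 :=
      no_mixed hchar hη0 hη1 ha hb hd hτa hτb hτd hab2 had2 hbd2 hcax hpfix hneg hceq
    rw [hceq, hch0, add_zero]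
    exact hpfix
  -- τa is the identity on A
  let PS : NonUnitalSubalgebra F A :=
    { carrier := {u | τa u = u}
      add_mem' := by
        intro u v hu hv
        simp only [Set.mem_setOf_eq] at *
        rw [hτa.map_add, hu, hv]
      zero_mem' := by
        simp only [Set.mem_setOf_eq]
        exact tau_zero hτa
      smul_mem' := by
        intro r u hu
        simp only [Set.mem_setOf_eq] at *
        rw [hτa.map_smul, hu]
      mul_mem' := by
        intro u v hu hv
        simp only [Set.mem_setOf_eq] at *
        rw [hτa.map_mul, hu, hv] }
  have hle : NonUnitalAlgebra.adjoin F 𝒜 ≤ PS :=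
    NonUnitalAlgebra.adjoin_le (fun c hc => hfix𝒜 c hc)
  have hall : ∀ u : A, τa u = u := by
    intro u
    have hu : u ∈ NonUnitalAlgebra.adjoin F 𝒜 := by
      rw [hgen]; exact NonUnitalAlgebra.mem_top
    exact hle hu
  -- generators multiply with a trivially
  have hgenc : ∀ c, IsAxis F η c → a * c = 0 ∨ c = a := by
    intro c hcax
    rcases proj hchar ha hτa (hall c) with ⟨κ, c0, hc0, hceq, hac⟩
    have hκsq : κ * κ = κ := by
      have h1 : a * (c * c) = (κ * κ) • a :=
        projMul hchar ha hτa (hall c) (hall c) hac hac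
      rw [hcax.idem, hac] at h1
      exact smul_cancel ha.ne_zero h1.symm
    by_cases hκ0 : κ = 0
    · left; rw [hac, hκ0, zero_smul]
    · right
      have hκ1 : κ = 1 := mul_left_cancel₀ hκ0 (by rw [hκsq, mul_one])
      have hmem : a ∈ eigSp F c 1 := by
        rw [mem_eigSp, one_smul, mul_comm, hac, hκ1, one_smul]
      rw [hcax.prim] at hmem
      rcases Submodule.mem_span_singleton.mp hmem with ⟨lam, hlam⟩
      have hlam0 : lam ≠ 0 := by
        rintro rfl; rw [zero_smul] at hlam; exact ha.ne_zero hlam.symm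
      have h3 : (lam • c) * (lam • c) = (lam * lam) • c := by
        rw [smul_mul_assoc, mul_smul_comm, smul_smul, hcax.idem]
      have h2 : (lam * lam) • c = lam • c := by
        rw [← h3, hlam, ha.idem]
      have hll : lam * lam = lam := smul_cancel hcax.ne_zero h2
      have hlam1 : lam = 1 := mul_left_cancel₀ hlam0 (by rw [hll, mul_one])
      rw [← hlam, hlam1, one_smul]
  by_cases hmem : a ∈ 𝒜
  · -- all of 𝒜 equals a
    have key : ∀ (u v : ↑𝒜) (w : (axesGraph 𝒜).Walk u v), (u : A) = a → (v : A) = a := by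
      intro u v w
      induction w with
      | nil => intro h; exact h
      | cons hadj w ih =>
        intro h
        rcases hadj with ⟨hne, hprod⟩
        rw [h] at hprod
        rcases hgenc _ (h𝒜 _ (Subtype.mem _)) with h0 | h1
        · exact absurd h0 hprod
        · exact ih h1
    have hsub : ∀ c ∈ 𝒜, c = a := by
      intro c hc
      rcases hconn.preconnected ⟨a, hmem⟩ ⟨c, hc⟩ with ⟨w⟩
      exact key _ _ w rfl
    -- hence A = span {a}
    let SpanA : NonUnitalSubalgebra F A :=
      { carrier := (Submodule.span F {a} : Submodule F A)
        add_mem' := fun hu hv => Submodule.add_mem _ hu hv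
        zero_mem' := Submodule.zero_mem _
        smul_mem' := fun r u hu => Submodule.smul_mem _ r hu
        mul_mem' := by
          intro u v hu hv
          rcases Submodule.mem_span_singleton.mp hu with ⟨s, rfl⟩
          rcases Submodule.mem_span_singleton.mp hv with ⟨t, rfl⟩
          refine Submodule.mem_span_singleton.mpr ⟨s * t, ?_⟩
          rw [smul_mul_assoc, mul_smul_comm, ha.idem, smul_smul] }
    have hle2 : NonUnitalAlgebra.adjoin F 𝒜 ≤ SpanA :=
      NonUnitalAlgebra.adjoin_le (fun c hc => by
        have := hsub c hc
        rw [this]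
        exact Submodule.mem_span_singleton_self a)
    have hble : b ∈ Submodule.span F ({a} : Set A) := by
      have hb2 : b ∈ NonUnitalAlgebra.adjoin F 𝒜 := by
        rw [hgen]; exact NonUnitalAlgebra.mem_top
      exact hle2 hb2
    rcases Submodule.mem_span_singleton.mp hble with ⟨lam, hlam⟩
    have hlam0 : lam ≠ 0 := by
      rintro rfl; rw [zero_smul] at hlam; exact hb.ne_zero hlam.symm
    have h3 : (lam • a) * (lam • a) = (lam * lam) • a := by
      rw [smul_mul_assoc, mul_smul_comm, smul_smul, ha.idem]
    have h2 : (lam * lam) • a = lam • a := by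
      rw [← h3, hlam, hb.idem]
    have hll : lam * lam = lam := smul_cancel ha.ne_zero h2
    have hlam1 : lam = 1 := mul_left_cancel₀ hlam0 (by rw [hll, mul_one])
    have hba : b = a := by rw [← hlam, hlam1, one_smul]
    exact hab hba.symm
  · -- a not a generator : everything is annihilated by a
    let N : NonUnitalSubalgebra F A :=
      { carrier := (eigSp F a 0 : Submodule F A)
        add_mem' := fun hu hv => Submodule.add_mem _ hu hv
        zero_mem' := Submodule.zero_mem _
        smul_mem' := fun r u hu => Submodule.smul_mem _ r hu
        mul_mem' := fun hu hv => ha.f00 _ hu _ hv }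
    have hle2 : NonUnitalAlgebra.adjoin F 𝒜 ≤ N :=
      NonUnitalAlgebra.adjoin_le (fun c hc => by
        rcases hgenc c (h𝒜 c hc) with h | h
        · exact mem_eigSp.mpr (by rw [h, zero_smul])
        · exact absurd (h ▸ hc) hmem)
    have hamem : a ∈ N := by
      have ha2 : a ∈ NonUnitalAlgebra.adjoin F 𝒜 := by
        rw [hgen]; exact NonUnitalAlgebra.mem_top
      exact hle2 ha2
    have haz : a * a = 0 := by
      have h := mem_eigSp.mp hamem
      rwa [zero_smul] at h
    rw [ha.idem] at haz
    exact ha.ne_zero haz
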